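/- Let (L,θ_L) be a 3-LieDer pair. If H²_{3-LieDer}(L;L) = 0 (cohomology with coefficients in the adjoint representation), then (L,θ_L) is rigid: every one-parameter formal deformation of (L,θ_L) is equivalent to the trivial deformation (f_0,g_0) = ([·,·,·]_L, θ_L). -/

import Mathlib

open Function Finset

/-- Total skew-symmetry of a trilinear map (generated by adjacent transpositions). -/
def SkewTri {L V : Type*} [AddCommGroup V] (f : L → L → L → V) : Prop :=
  (∀ x y z, f x y z = - f y x z) ∧ (∀ x y z, f x y z = - f x z y)

/-- The fundamental identity of a 3-Lie algebra. -/
def FundId {L : Type*} [AddCommGroup L] (f : L → L → L → L) : Prop :=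
  ∀ x1 x2 x3 x4 x5,
    f x1 x2 (f x3 x4 x5)
      = f (f x1 x2 x3) x4 x5 + f x3 (f x1 x2 x4) x5 + f x3 x4 (f x1 x2 x5)

/-- Trilinearity of a map `L × L × L → V`. -/
def IsTrilin (F : Type*) {L V : Type*} [Field F] [AddCommGroup L] [Module F L]
    [AddCommGroup V] [Module F V] (f : L → L → L → V) : Prop :=
  (∀ y z, IsLinearMap F (fun x => f x y z)) ∧
  (∀ x z, IsLinearMap F (fun y => f x y z)) ∧
  (∀ x y, IsLinearMap F (fun z => f x y z))

/-- `θ` is a derivation of the ternary bracket `f`. -/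
def IsDeriv3 {W : Type*} [AddCommGroup W] (f : W → W → W → W) (θ : W → W) : Prop :=
  ∀ x y z, θ (f x y z) = f (θ x) y z + f x (θ y) z + f x y (θ z)

/-- `ρ` is a representation of the 3-Lie algebra `(L,f)` on `V`. -/
def IsRep3 (F : Type*) {L V : Type*} [Field F] [AddCommGroup L] [Module F L]
    [AddCommGroup V] [Module F V] (f : L → L → L → L) (ρ : L → L → V → V) : Prop :=
  (∀ y v, IsLinearMap F (fun x => ρ x y v)) ∧
  (∀ x v, IsLinearMap F (fun y => ρ x y v)) ∧
  (∀ x y, IsLinearMap F (ρ x y)) ∧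
  (∀ x y v, ρ x y v = - ρ y x v) ∧
  (∀ x1 x2 x3 x4 v, ρ x1 x2 (ρ x3 x4 v)
      = ρ (f x1 x2 x3) x4 v + ρ x3 (f x1 x2 x4) v + ρ x3 x4 (ρ x1 x2 v)) ∧
  (∀ x1 x2 x3 x4 v, ρ x1 (f x2 x3 x4) v
      = ρ x3 x4 (ρ x1 x2 v) - ρ x2 x4 (ρ x1 x3 v) + ρ x2 x3 (ρ x1 x4 v))

/-- `(ρ, θV)` is a representation of the 3-LieDer pair `(L, f, θL)` on `V`. -/
def IsRepPair (F : Type*) {L V : Type*} [Field F] [AddCommGroup L] [Module F L]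
    [AddCommGroup V] [Module F V] (f : L → L → L → L) (θL : L → L)
    (ρ : L → L → V → V) (θV : V → V) : Prop :=
  IsRep3 F f ρ ∧
  ∀ x y v, θV (ρ x y v) - ρ x y (θV v) = ρ (θL x) y v + ρ x (θL y) v

section Deformations

/-- Formal power series with coefficients in `L`, i.e. the module `L[[t]]`. -/
abbrev LTSeries3 (L : Type*) := ℕ → L

variable {L A : Type*} [AddCommGroup L] [AddCommGroup A]

/-- The `F[[t]]`-trilinear extension `f_t = Σ fᵢ tⁱ` of a family of trilinear maps
to `L[[t]]`, computed by convolution of coefficients. -/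
def Ft (f : ℕ → L → L → L → L) : LTSeries3 L → LTSeries3 L → LTSeries3 L → LTSeries3 L :=
  fun a b c n =>
    ∑ p ∈ Finset.range (n + 1), ∑ q ∈ Finset.range (n + 1 - p),
      ∑ r ∈ Finset.range (n + 1 - p - q),
        f p (a q) (b r) (c (n - p - q - r))

/-- The `F[[t]]`-linear extension `g_t = Σ gᵢ tⁱ` of a family of linear maps to
`L[[t]]`. -/
def Gt (g : ℕ → L → L) : LTSeries3 L → LTSeries3 L :=
  fun a n => ∑ p ∈ Finset.range (n + 1), g p (a (n - p))

/-- `(f_t, g_t)` is a one-parameter formal deformation of the 3-LieDer pair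
`(L, bracket, θ)`: each `fᵢ` is trilinear skew-symmetric with `f₀` the original
bracket, each `gᵢ` is linear with `g₀ = θ`, and `(L[[t]], f_t, g_t)` is a
3-LieDer pair over `F[[t]]`. -/
def IsDeformation (F : Type*) {L : Type*} [Field F] [AddCommGroup L] [Module F L]
    (bracket : L → L → L → L) (θ : L → L)
    (f : ℕ → L → L → L → L) (g : ℕ → L → L) : Prop :=
  f 0 = bracket ∧ g 0 = θ ∧
  (∀ i, IsTrilin F (f i)) ∧ (∀ i, SkewTri (f i)) ∧ (∀ i, IsLinearMap F (g i)) ∧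
  FundId (Ft f) ∧ IsDeriv3 (Ft f) (Gt g)

/-- The coboundary `d : C¹(B;A) → C²(B;A)` with coefficients in `ρ`. -/
def d1c {B : Type*} (br : B → B → B → B) (ρ : B → B → A → A) (χ : B → A) :
    B → B → B → A :=
  fun x y z => ρ x y (χ z) - χ (br x y z) + ρ y z (χ x) - ρ x z (χ y)

/-- The coboundary `d : C²(B;A) → C³(B;A)` with coefficients in `ρ`. -/
def d2c {B : Type*} (br : B → B → B → B) (ρ : B → B → A → A) (ψ : B → B → B → A) :
    B → B → B → B → B → A :=
  fun x1 x2 x3 x4 z =>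
    - ψ (br x1 x2 x3) x4 z - ψ x3 (br x1 x2 x4) z
    - ψ x3 x4 (br x1 x2 z) + ψ x1 x2 (br x3 x4 z)
    + ρ x1 x2 (ψ x3 x4 z) - ρ x3 x4 (ψ x1 x2 z)
    - ρ x4 z (ψ x1 x2 x3) + ρ x3 z (ψ x1 x2 x4)

/-- The coboundary `d : C³(B;A) → C⁴(B;A)` with coefficients in `ρ` (arguments
`(a₁∧b₁, a₂∧b₂, a₃∧b₃, z)`). -/
def d3c {B : Type*} (br : B → B → B → B) (ρ : B → B → A → A)
    (α : B → B → B → B → B → A) : B → B → B → B → B → B → B → A :=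
  fun a1 b1 a2 b2 a3 b3 z =>
    - α (br a1 b1 a2) b2 a3 b3 z - α a2 (br a1 b1 b2) a3 b3 z
    - α a2 b2 (br a1 b1 a3) b3 z - α a2 b2 a3 (br a1 b1 b3) z
    + α a1 b1 (br a2 b2 a3) b3 z + α a1 b1 a3 (br a2 b2 b3) z
    - α a2 b2 a3 b3 (br a1 b1 z) + α a1 b1 a3 b3 (br a2 b2 z)
    - α a1 b1 a2 b2 (br a3 b3 z)
    + ρ a1 b1 (α a2 b2 a3 b3 z) - ρ a2 b2 (α a1 b1 a3 b3 z)
    + ρ a3 b3 (α a1 b1 a2 b2 z)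
    + ρ b3 z (α a1 b1 a2 b2 a3) - ρ a3 z (α a1 b1 a2 b2 b3)

/-- The operator `δ : C¹(B;A) → C¹(B;A)`. -/
def delta1c {B : Type*} (θB : B → B) (θA : A → A) (χ : B → A) : B → A :=
  fun z => χ (θB z) - θA (χ z)

/-- The operator `δ : C²(B;A) → C²(B;A)`. -/
def delta2c {B : Type*} (θB : B → B) (θA : A → A) (ψ : B → B → B → A) :
    B → B → B → A :=
  fun x y z => ψ (θB x) y z + ψ x (θB y) z + ψ x y (θB z) - θA (ψ x y z)

/-- The operator `δ : C³(B;A) → C³(B;A)`. -/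
def delta3c {B : Type*} (θB : B → B) (θA : A → A) (α : B → B → B → B → B → A) :
    B → B → B → B → B → A :=
  fun a1 b1 a2 b2 z =>
    α (θB a1) b1 a2 b2 z + α a1 (θB b1) a2 b2 z + α a1 b1 (θB a2) b2 z
    + α a1 b1 a2 (θB b2) z + α a1 b1 a2 b2 (θB z) - θA (α a1 b1 a2 b2 z)

end Deformations

/-- The two one-parameter formal deformations `(f_t, g_t)` and `(f'_t, g'_t)` are
equivalent: there is a formal isomorphism `Φ_t = Σ φᵢ tⁱ` with `φ₀ = id` such that
`Φ_t ∘ f'_t = f_t ∘ (Φ_t × Φ_t × Φ_t)` and `Φ_t ∘ g'_t = g_t ∘ Φ_t`. -/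
def AreEquivDef (F : Type*) {L : Type*} [Field F] [AddCommGroup L] [Module F L]
    (f : ℕ → L → L → L → L) (g : ℕ → L → L)
    (f' : ℕ → L → L → L → L) (g' : ℕ → L → L) : Prop :=
  ∃ φ : ℕ → L → L, φ 0 = id ∧ (∀ i, IsLinearMap F (φ i)) ∧
    (∀ a b c : LTSeries3 L, Gt φ (Ft f' a b c) = Ft f (Gt φ a) (Gt φ b) (Gt φ c)) ∧
    (∀ a : LTSeries3 L, Gt φ (Gt g' a) = Gt g (Gt φ a))


section RigidityAux

open Finset

variable {L : Type*} [AddCommGroup L]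

/-- The "monomial" series `x tⁱ`. -/
def dser (i : ℕ) (x : L) : LTSeries3 L := fun m => if m = i then x else 0

/-- Shift a series by `s` (multiplication by `tˢ`). -/
def shf (s : ℕ) (t : LTSeries3 L) : LTSeries3 L := fun m => if s ≤ m then t (m - s) else 0

lemma shf_zero (t : LTSeries3 L) : shf 0 t = t := by
  funext m; simp [shf]

lemma shf_shf (s u : ℕ) (t : LTSeries3 L) : shf s (shf u t) = shf (s + u) t := by
  funext m
  simp only [shf]
  split_ifs with h1 h2 h3 h3 <;> first
    | (congr 1; omega)
    | rfl
    | omega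

lemma shf_add (s : ℕ) (t t' : LTSeries3 L) : shf s (t + t') = shf s t + shf s t' := by
  funext m
  simp only [shf, Pi.add_apply]
  split_ifs <;> simp

lemma shf_dser (s i : ℕ) (x : L) : shf s (dser i x) = dser (s + i) x := by
  funext m
  simp only [shf, dser]
  split_ifs <;> first | rfl | omega

lemma shf_congr {s s' : ℕ} (h : s = s') (t : LTSeries3 L) : shf s t = shf s' t := by rw [h]

lemma addf_zero {M N : Type*} [AddCommGroup M] [AddCommGroup N] {Θ : M → N}
    (h : ∀ a b, Θ (a + b) = Θ a + Θ b) : Θ 0 = 0 := by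
  have h0 := h 0 0
  rw [add_zero] at h0
  exact (left_eq_add.mp h0)

lemma addf_sum {M N : Type*} [AddCommGroup M] [AddCommGroup N] {Θ : M → N}
    (h : ∀ a b, Θ (a + b) = Θ a + Θ b) {ι : Type*} (s : Finset ι) (t : ι → M) :
    Θ (∑ i ∈ s, t i) = ∑ i ∈ s, Θ (t i) := by
  classical
  induction s using Finset.induction with
  | empty => simpa using addf_zero h
  | insert _ _ hx ih =>
      rw [Finset.sum_insert hx, Finset.sum_insert hx, h, ih]

lemma gt_apply (g : ℕ → L → L) (a : LTSeries3 L) (n : ℕ) :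
    Gt g a n = ∑ p ∈ range (n + 1), g p (a (n - p)) := rfl

lemma gt_low {g : ℕ → L → L} {a b : LTSeries3 L} {n : ℕ} (h : ∀ m ≤ n, a m = b m) :
    Gt g a n = Gt g b n := by
  refine Finset.sum_congr rfl fun p hp => ?_
  rw [h _ (by omega)]

lemma gt_fam_low {g g' : ℕ → L → L} {a : LTSeries3 L} {n : ℕ}
    (h : ∀ p ≤ n, g p = g' p) : Gt g a n = Gt g' a n := by
  refine Finset.sum_congr rfl fun p hp => ?_
  rw [h _ (by simp at hp; omega)]

lemma gt_add {g : ℕ → L → L} (hg : ∀ p x y, g p (x + y) = g p x + g p y)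
    (a b : LTSeries3 L) : Gt g (a + b) = Gt g a + Gt g b := by
  funext n
  simp only [Gt, Pi.add_apply, hg, Finset.sum_add_distrib]

lemma gt_dser {g : ℕ → L → L} (hg0 : ∀ p, g p 0 = 0) (i : ℕ) (x : L) :
    Gt g (dser i x) = shf i (fun m => g m x) := by
  funext n
  simp only [Gt, shf, dser]
  by_cases hi : i ≤ n
  · rw [Finset.sum_eq_single_of_mem (n - i) (by simp)]
    · rw [if_pos (by omega), if_pos hi]
    · intro p hp hpne
      rw [if_neg (by simp at hp; omega), hg0]
  · rw [if_neg hi, Finset.sum_eq_zero]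
    intro p hp
    rw [if_neg (by simp at hp; omega), hg0]

lemma gt_shf {g : ℕ → L → L} (hg0 : ∀ p, g p 0 = 0) (s : ℕ) (t : LTSeries3 L) :
    Gt g (shf s t) = shf s (Gt g t) := by
  funext n
  have hterm : ∀ p ∈ range (n + 1), g p (shf s t (n - p)) =
      if s ≤ n - p then g p (t (n - p - s)) else 0 := by
    intro p hp
    simp only [shf]
    split_ifs with h
    · rfl
    · exact hg0 p
  rw [gt_apply, Finset.sum_congr rfl hterm]
  simp only [shf, Gt]
  by_cases hs : s ≤ n
  · rw [if_pos hs, ← Finset.sum_subset (Finset.range_subset_range.mpr (by omega : n - s + 1 ≤ n + 1))]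
    · refine Finset.sum_congr rfl fun p hp => ?_
      simp at hp
      rw [if_pos (by omega), show n - p - s = n - s - p from by omega]
    · intro p hp hpn
      simp at hp hpn
      rw [if_neg (by omega)]
  · rw [if_neg hs, Finset.sum_eq_zero]
    intro p hp
    simp at hp
    rw [if_neg (by omega)]

/-- The identity coefficient family. -/
def idf : ℕ → L → L := fun i => if i = 0 then (fun x => x) else (fun _ => 0)

lemma gt_idf (a : LTSeries3 L) : Gt (idf) a = a := by
  funext n
  rw [gt_apply, Finset.sum_eq_single_of_mem 0 (by simp)]
  · simp [idf]
  · intro p hp hpne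
    simp [idf, hpne]

lemma trunc_sum (a : LTSeries3 L) (n m : ℕ) (hm : m ≤ n) :
    (∑ i ∈ range (n + 1), dser i (a i)) m = a m := by
  rw [Finset.sum_apply, Finset.sum_eq_single_of_mem m (by simp; omega)]
  · simp [dser]
  · intro i hi hine
    simp [dser, Ne.symm hine]

lemma ext1 {n : ℕ} {T1 T2 : LTSeries3 L → L}
    (h1a : ∀ a b, T1 (a + b) = T1 a + T1 b) (h2a : ∀ a b, T2 (a + b) = T2 a + T2 b)
    (h1l : ∀ a b, (∀ m ≤ n, a m = b m) → T1 a = T1 b)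
    (h2l : ∀ a b, (∀ m ≤ n, a m = b m) → T2 a = T2 b)
    (hm : ∀ i x, i ≤ n → T1 (dser i x) = T2 (dser i x)) :
    ∀ a, T1 a = T2 a := by
  intro a
  have e1 : T1 a = ∑ i ∈ range (n + 1), T1 (dser i (a i)) := by
    rw [← addf_sum h1a]
    exact h1l _ _ fun m hmn => (trunc_sum a n m hmn).symm
  have e2 : T2 a = ∑ i ∈ range (n + 1), T2 (dser i (a i)) := by
    rw [← addf_sum h2a]
    exact h2l _ _ fun m hmn => (trunc_sum a n m hmn).symm
  rw [e1, e2]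
  exact Finset.sum_congr rfl fun i hi => hm i (a i) (by simp at hi; omega)


lemma ft_apply (f : ℕ → L → L → L → L) (a b c : LTSeries3 L) (n : ℕ) :
    Ft f a b c n = ∑ p ∈ range (n + 1), ∑ q ∈ range (n + 1 - p),
      ∑ r ∈ range (n + 1 - p - q), f p (a q) (b r) (c (n - p - q - r)) := rfl

lemma ft_low {f : ℕ → L → L → L → L} {a a' b b' c c' : LTSeries3 L} {n : ℕ}
    (ha : ∀ m ≤ n, a m = a' m) (hb : ∀ m ≤ n, b m = b' m) (hc : ∀ m ≤ n, c m = c' m) :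
    Ft f a b c n = Ft f a' b' c' n := by
  refine Finset.sum_congr rfl fun p hp => Finset.sum_congr rfl fun q hq =>
    Finset.sum_congr rfl fun r hr => ?_
  simp only [Finset.mem_range] at hp hq hr
  rw [ha _ (by omega), hb _ (by omega), hc _ (by omega)]

lemma ft_fam_low {f f' : ℕ → L → L → L → L} {a b c : LTSeries3 L} {n : ℕ}
    (h : ∀ p ≤ n, f p = f' p) : Ft f a b c n = Ft f' a b c n := by
  refine Finset.sum_congr rfl fun p hp => ?_
  rw [h _ (by simp at hp; omega)]

lemma ft_add1 {f : ℕ → L → L → L → L}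
    (hf : ∀ p x x' y z, f p (x + x') y z = f p x y z + f p x' y z)
    (a a' b c : LTSeries3 L) : Ft f (a + a') b c = Ft f a b c + Ft f a' b c := by
  funext n
  simp only [Ft, Pi.add_apply, hf, Finset.sum_add_distrib]

lemma ft_add2 {f : ℕ → L → L → L → L}
    (hf : ∀ p x y y' z, f p x (y + y') z = f p x y z + f p x y' z)
    (a b b' c : LTSeries3 L) : Ft f a (b + b') c = Ft f a b c + Ft f a b' c := by
  funext n
  simp only [Ft, Pi.add_apply, hf, Finset.sum_add_distrib]

lemma ft_add3 {f : ℕ → L → L → L → L}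
    (hf : ∀ p x y z z', f p x y (z + z') = f p x y z + f p x y z')
    (a b c c' : LTSeries3 L) : Ft f a b (c + c') = Ft f a b c + Ft f a b c' := by
  funext n
  simp only [Ft, Pi.add_apply, hf, Finset.sum_add_distrib]

lemma ft_delta {f : ℕ → L → L → L → L}
    (h01 : ∀ p y z, f p 0 y z = 0) (h02 : ∀ p x z, f p x 0 z = 0)
    (h03 : ∀ p x y, f p x y 0 = 0) (i j l : ℕ) (x y z : L) :
    Ft f (dser i x) (dser j y) (dser l z) = shf (i + j + l) (fun m => f m x y z) := by
  funext n
  rw [ft_apply]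
  have inner : ∀ p q, p + q ≤ n →
      (∑ r ∈ range (n + 1 - p - q), f p (dser i x q) (dser j y r) (dser l z (n - p - q - r)))
      = if j + l = n - p - q then f p (dser i x q) y z else 0 := by
    intro p q hpq
    by_cases hj : j ≤ n - p - q
    · rw [Finset.sum_eq_single_of_mem j (by simp; omega)]
      · rw [show dser j y j = y from by simp [dser]]
        by_cases hl : n - p - q - j = l
        · rw [show dser l z (n - p - q - j) = z from by simp [dser, hl], if_pos (by omega)]
        · rw [show dser l z (n - p - q - j) = 0 from by simp [dser, hl], if_neg (by omega), h03]
      · intro r hr hrj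
        rw [show dser j y r = 0 from by simp [dser, hrj], h02]
    · rw [Finset.sum_eq_zero, if_neg (by omega)]
      intro r hr
      simp only [Finset.mem_range] at hr
      rw [show dser j y r = 0 from by simp [dser]; omega, h02]
  have mid : ∀ p, p ≤ n →
      (∑ q ∈ range (n + 1 - p), ∑ r ∈ range (n + 1 - p - q),
        f p (dser i x q) (dser j y r) (dser l z (n - p - q - r)))
      = if i + j + l = n - p then f p x y z else 0 := by
    intro p hp
    rw [Finset.sum_congr rfl fun q hq => inner p q (by simp at hq; omega)]
    by_cases hi : i ≤ n - p
    · rw [Finset.sum_eq_single_of_mem i (by simp; omega)]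
      · rw [show dser i x i = x from by simp [dser]]
        by_cases h : j + l = n - p - i
        · rw [if_pos h, if_pos (by omega)]
        · rw [if_neg h, if_neg (by omega)]
      · intro q hq hqi
        rw [show dser i x q = 0 from by simp [dser, hqi]]
        split_ifs with h
        · exact h01 p y z
        · rfl
    · rw [Finset.sum_eq_zero, if_neg (by omega)]
      intro q hq
      simp only [Finset.mem_range] at hq
      rw [show dser i x q = 0 from by simp [dser]; omega]
      split_ifs with h
      · exact h01 p y z
      · rfl
  rw [Finset.sum_congr rfl fun p hp => mid p (by simp at hp; omega)]
  simp only [shf]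
  by_cases hn : i + j + l ≤ n
  · rw [Finset.sum_eq_single_of_mem (n - (i + j + l)) (by simp)]
    · rw [if_pos (by omega), if_pos hn]
    · intro p hp hpne
      rw [if_neg (by simp at hp; omega)]
  · rw [Finset.sum_eq_zero, if_neg hn]
    intro p hp
    rw [if_neg (by simp at hp; omega)]

lemma ext3 {n : ℕ} {T1 T2 : LTSeries3 L → LTSeries3 L → LTSeries3 L → L}
    (h1a1 : ∀ a a' b c, T1 (a + a') b c = T1 a b c + T1 a' b c)
    (h1a2 : ∀ a b b' c, T1 a (b + b') c = T1 a b c + T1 a b' c)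
    (h1a3 : ∀ a b c c', T1 a b (c + c') = T1 a b c + T1 a b c')
    (h2a1 : ∀ a a' b c, T2 (a + a') b c = T2 a b c + T2 a' b c)
    (h2a2 : ∀ a b b' c, T2 a (b + b') c = T2 a b c + T2 a b' c)
    (h2a3 : ∀ a b c c', T2 a b (c + c') = T2 a b c + T2 a b c')
    (h1l : ∀ a a' b b' c c', (∀ m ≤ n, a m = a' m) → (∀ m ≤ n, b m = b' m) →
      (∀ m ≤ n, c m = c' m) → T1 a b c = T1 a' b' c')
    (h2l : ∀ a a' b b' c c', (∀ m ≤ n, a m = a' m) → (∀ m ≤ n, b m = b' m) →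
      (∀ m ≤ n, c m = c' m) → T2 a b c = T2 a' b' c')
    (hm : ∀ i j l x y z, i ≤ n → j ≤ n → l ≤ n →
      T1 (dser i x) (dser j y) (dser l z) = T2 (dser i x) (dser j y) (dser l z)) :
    ∀ a b c, T1 a b c = T2 a b c := by
  have expand : ∀ (T : LTSeries3 L → LTSeries3 L → LTSeries3 L → L),
      (∀ a a' b c, T (a + a') b c = T a b c + T a' b c) →
      (∀ a b b' c, T a (b + b') c = T a b c + T a b' c) →
      (∀ a b c c', T a b (c + c') = T a b c + T a b c') →
      (∀ a a' b b' c c', (∀ m ≤ n, a m = a' m) → (∀ m ≤ n, b m = b' m) →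
        (∀ m ≤ n, c m = c' m) → T a b c = T a' b' c') →
      ∀ a b c, T a b c = ∑ i ∈ range (n + 1), ∑ j ∈ range (n + 1), ∑ l ∈ range (n + 1),
        T (dser i (a i)) (dser j (b j)) (dser l (c l)) := by
    intro T ha1 ha2 ha3 hl a b c
    have step : T a b c = T (∑ i ∈ range (n + 1), dser i (a i))
        (∑ j ∈ range (n + 1), dser j (b j)) (∑ l ∈ range (n + 1), dser l (c l)) :=
      hl _ _ _ _ _ _ (fun m hm => (trunc_sum a n m hm).symm)
        (fun m hm => (trunc_sum b n m hm).symm) (fun m hm => (trunc_sum c n m hm).symm)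
    rw [step,
      addf_sum (Θ := fun u => T u (∑ j ∈ range (n + 1), dser j (b j))
        (∑ l ∈ range (n + 1), dser l (c l))) (fun u v => ha1 u v _ _)]
    refine Finset.sum_congr rfl fun i hi => ?_
    rw [addf_sum (Θ := fun u => T (dser i (a i)) u (∑ l ∈ range (n + 1), dser l (c l)))
      (fun u v => ha2 _ u v _)]
    refine Finset.sum_congr rfl fun j hj => ?_
    rw [addf_sum (Θ := fun u => T (dser i (a i)) (dser j (b j)) u) (fun u v => ha3 _ _ u v)]
  intro a b c
  rw [expand T1 h1a1 h1a2 h1a3 h1l, expand T2 h2a1 h2a2 h2a3 h2l]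
  refine Finset.sum_congr rfl fun i hi => Finset.sum_congr rfl fun j hj =>
    Finset.sum_congr rfl fun l hl => ?_
  exact hm i j l _ _ _ (by simp at hi; omega) (by simp at hj; omega) (by simp at hl; omega)

/-- Coefficient convolution of two families of linear maps. -/
def convf (α β : ℕ → L → L) : ℕ → L → L := fun m x => ∑ p ∈ range (m + 1), α p (β (m - p) x)

lemma gt_conv {α β : ℕ → L → L}
    (hαa : ∀ p x y, α p (x + y) = α p x + α p y) (hα0 : ∀ p, α p 0 = 0)
    (hβa : ∀ p x y, β p (x + y) = β p x + β p y) (hβ0 : ∀ p, β p 0 = 0)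
    (a : LTSeries3 L) : Gt (convf α β) a = Gt α (Gt β a) := by
  have hca : ∀ p x y, convf α β p (x + y) = convf α β p x + convf α β p y := by
    intro p x y
    simp only [convf, hβa, hαa, Finset.sum_add_distrib]
  have hc0 : ∀ p, convf α β p 0 = 0 := by
    intro p
    simp only [convf, hβ0, hα0, Finset.sum_const_zero]
  funext n
  refine ext1 (n := n) (T1 := fun a => Gt (convf α β) a n) (T2 := fun a => Gt α (Gt β a) n)
    (fun u v => by show Gt (convf α β) (u + v) n = _; rw [gt_add hca]; rfl)
    (fun u v => by show Gt α (Gt β (u + v)) n = _; rw [gt_add hβa, gt_add hαa]; rfl)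
    (fun u v h => gt_low h)
    (fun u v h => gt_low (fun m hm => gt_low (fun m' hm' => h m' (le_trans hm' hm))))
    ?_ a
  intro i x hi
  show Gt (convf α β) (dser i x) n = Gt α (Gt β (dser i x)) n
  rw [gt_dser hc0, gt_dser hβ0, gt_shf hα0]
  have : (fun m => convf α β m x) = Gt α (fun q => β q x) := by
    funext m
    rfl
  rw [this]


lemma gt_neg {g : ℕ → L → L} (hg : ∀ p x y, g p (x + y) = g p x + g p y)
    (a : LTSeries3 L) : Gt g (-a) = -Gt g a := by
  have hneg : ∀ p x, g p (-x) = - g p x := by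
    intro p x
    have := hg p x (-x)
    rw [add_neg_cancel, addf_zero (hg p)] at this
    exact eq_neg_of_add_eq_zero_right this.symm
  funext n
  simp only [Gt, Pi.neg_apply, hneg, Finset.sum_neg_distrib]

section ModAux

variable {F : Type*} [Field F] [Module F L]

lemma tri_add1 {f : L → L → L → L} (hf : IsTrilin F f) (x x' y z : L) :
    f (x + x') y z = f x y z + f x' y z := by
  simpa using (hf.1 y z).map_add x x'

lemma tri_add2 {f : L → L → L → L} (hf : IsTrilin F f) (x y y' z : L) :
    f x (y + y') z = f x y z + f x y' z := by
  simpa using (hf.2.1 x z).map_add y y'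

lemma tri_add3 {f : L → L → L → L} (hf : IsTrilin F f) (x y z z' : L) :
    f x y (z + z') = f x y z + f x y z' := by
  simpa using (hf.2.2 x y).map_add z z'

lemma tri_zero1 {f : L → L → L → L} (hf : IsTrilin F f) (y z : L) : f 0 y z = 0 := by
  simpa using (hf.1 y z).map_zero

lemma tri_zero2 {f : L → L → L → L} (hf : IsTrilin F f) (x z : L) : f x 0 z = 0 := by
  simpa using (hf.2.1 x z).map_zero

lemma tri_zero3 {f : L → L → L → L} (hf : IsTrilin F f) (x y : L) : f x y 0 = 0 := by
  simpa using (hf.2.2 x y).map_zero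

lemma gt_smul {g : ℕ → L → L} (hg : ∀ p, IsLinearMap F (g p)) (r : F) (a : LTSeries3 L) :
    Gt g (r • a) = r • Gt g a := by
  funext n
  simp only [Gt, Pi.smul_apply, Finset.smul_sum]
  exact Finset.sum_congr rfl fun p hp => (hg p).map_smul r _

lemma ft_smul1 {f : ℕ → L → L → L → L} (hf : ∀ i, IsTrilin F (f i)) (r : F)
    (a b c : LTSeries3 L) : Ft f (r • a) b c = r • Ft f a b c := by
  funext n
  simp only [Ft, Pi.smul_apply, Finset.smul_sum]
  refine Finset.sum_congr rfl fun p _ => Finset.sum_congr rfl fun q _ =>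
    Finset.sum_congr rfl fun s _ => ?_
  simpa using ((hf p).1 _ _).map_smul r _

lemma ft_smul2 {f : ℕ → L → L → L → L} (hf : ∀ i, IsTrilin F (f i)) (r : F)
    (a b c : LTSeries3 L) : Ft f a (r • b) c = r • Ft f a b c := by
  funext n
  simp only [Ft, Pi.smul_apply, Finset.smul_sum]
  refine Finset.sum_congr rfl fun p _ => Finset.sum_congr rfl fun q _ =>
    Finset.sum_congr rfl fun s _ => ?_
  simpa using ((hf p).2.1 _ _).map_smul r _

lemma ft_smul3 {f : ℕ → L → L → L → L} (hf : ∀ i, IsTrilin F (f i)) (r : F)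
    (a b c : LTSeries3 L) : Ft f a b (r • c) = r • Ft f a b c := by
  funext n
  simp only [Ft, Pi.smul_apply, Finset.smul_sum]
  refine Finset.sum_congr rfl fun p _ => Finset.sum_congr rfl fun q _ =>
    Finset.sum_congr rfl fun s _ => ?_
  simpa using ((hf p).2.2 _ _).map_smul r _

lemma ft_skew12 {f : ℕ → L → L → L → L} (hf : ∀ i, IsTrilin F (f i))
    (hsk : ∀ i, SkewTri (f i)) (a b c : LTSeries3 L) : Ft f a b c = - Ft f b a c := by
  funext n
  refine ext3 (n := n) (T1 := fun a b c => Ft f a b c n)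
    (T2 := fun a b c => - Ft f b a c n)
    (fun u u' v w => by show Ft f (u + u') v w n = _; rw [ft_add1 (fun p => tri_add1 (hf p))]; rfl)
    (fun u v v' w => by show Ft f u (v + v') w n = _; rw [ft_add2 (fun p => tri_add2 (hf p))]; rfl)
    (fun u v w w' => by show Ft f u v (w + w') n = _; rw [ft_add3 (fun p => tri_add3 (hf p))]; rfl)
    (fun u u' v w => by
      show -Ft f v (u + u') w n = -Ft f v u w n + -Ft f v u' w n
      rw [ft_add2 (fun p => tri_add2 (hf p))]
      simp only [Pi.add_apply, neg_add])
    (fun u v v' w => by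
      show -Ft f (v + v') u w n = -Ft f v u w n + -Ft f v' u w n
      rw [ft_add1 (fun p => tri_add1 (hf p))]
      simp only [Pi.add_apply, neg_add])
    (fun u v w w' => by
      show -Ft f v u (w + w') n = -Ft f v u w n + -Ft f v u w' n
      rw [ft_add3 (fun p => tri_add3 (hf p))]
      simp only [Pi.add_apply, neg_add])
    (fun u u' v v' w w' h1 h2 h3 => ft_low h1 h2 h3)
    (fun u u' v v' w w' h1 h2 h3 => by
      show -Ft f v u w n = -Ft f v' u' w' n
      rw [ft_low h2 h1 h3])
    ?_ a b c
  intro i j l x y z hi hj hl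
  show Ft f (dser i x) (dser j y) (dser l z) n = - Ft f (dser j y) (dser i x) (dser l z) n
  rw [ft_delta (fun p => tri_zero1 (hf p)) (fun p => tri_zero2 (hf p)) (fun p => tri_zero3 (hf p)),
    ft_delta (fun p => tri_zero1 (hf p)) (fun p => tri_zero2 (hf p)) (fun p => tri_zero3 (hf p))]
  simp only [shf]
  rw [show j + i + l = i + j + l from by omega]
  split_ifs with h
  · exact (hsk _).1 x y z
  · rw [neg_zero]

lemma ft_skew23 {f : ℕ → L → L → L → L} (hf : ∀ i, IsTrilin F (f i))
    (hsk : ∀ i, SkewTri (f i)) (a b c : LTSeries3 L) : Ft f a b c = - Ft f a c b := by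
  funext n
  refine ext3 (n := n) (T1 := fun a b c => Ft f a b c n)
    (T2 := fun a b c => - Ft f a c b n)
    (fun u u' v w => by show Ft f (u + u') v w n = _; rw [ft_add1 (fun p => tri_add1 (hf p))]; rfl)
    (fun u v v' w => by show Ft f u (v + v') w n = _; rw [ft_add2 (fun p => tri_add2 (hf p))]; rfl)
    (fun u v w w' => by show Ft f u v (w + w') n = _; rw [ft_add3 (fun p => tri_add3 (hf p))]; rfl)
    (fun u u' v w => by
      show -Ft f (u + u') w v n = -Ft f u w v n + -Ft f u' w v n
      rw [ft_add1 (fun p => tri_add1 (hf p))]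
      simp only [Pi.add_apply, neg_add])
    (fun u v v' w => by
      show -Ft f u w (v + v') n = -Ft f u w v n + -Ft f u w v' n
      rw [ft_add3 (fun p => tri_add3 (hf p))]
      simp only [Pi.add_apply, neg_add])
    (fun u v w w' => by
      show -Ft f u (w + w') v n = -Ft f u w v n + -Ft f u w' v n
      rw [ft_add2 (fun p => tri_add2 (hf p))]
      simp only [Pi.add_apply, neg_add])
    (fun u u' v v' w w' h1 h2 h3 => ft_low h1 h2 h3)
    (fun u u' v v' w w' h1 h2 h3 => by
      show -Ft f u w v n = -Ft f u' w' v' n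
      rw [ft_low h1 h3 h2])
    ?_ a b c
  intro i j l x y z hi hj hl
  show Ft f (dser i x) (dser j y) (dser l z) n = - Ft f (dser i x) (dser l z) (dser j y) n
  rw [ft_delta (fun p => tri_zero1 (hf p)) (fun p => tri_zero2 (hf p)) (fun p => tri_zero3 (hf p)),
    ft_delta (fun p => tri_zero1 (hf p)) (fun p => tri_zero2 (hf p)) (fun p => tri_zero3 (hf p))]
  simp only [shf]
  rw [show i + l + j = i + j + l from by omega]
  split_ifs with h
  · exact (hsk _).2 x y z
  · rw [neg_zero]

lemma ft_slot1 {f : ℕ → L → L → L → L} (hf : ∀ i, IsTrilin F (f i)) (y z : L)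
    (t : LTSeries3 L) : Ft f t (dser 0 y) (dser 0 z) = Gt (fun p u => f p u y z) t := by
  funext n
  refine ext1 (n := n) (T1 := fun t => Ft f t (dser 0 y) (dser 0 z) n)
    (T2 := fun t => Gt (fun p u => f p u y z) t n)
    (fun u v => by show Ft f (u + v) _ _ n = _; rw [ft_add1 (fun p => tri_add1 (hf p))]; rfl)
    (fun u v => by show Gt _ (u + v) n = _; rw [gt_add (fun p a b => tri_add1 (hf p) a b y z)]; rfl)
    (fun u v h => ft_low h (fun _ _ => rfl) (fun _ _ => rfl))
    (fun u v h => gt_low h)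
    ?_ t
  intro i x hi
  show Ft f (dser i x) (dser 0 y) (dser 0 z) n = Gt (fun p u => f p u y z) (dser i x) n
  rw [ft_delta (fun p => tri_zero1 (hf p)) (fun p => tri_zero2 (hf p)) (fun p => tri_zero3 (hf p)),
    gt_dser (fun p => tri_zero1 (hf p) y z)]
  norm_num

lemma ft_slot2 {f : ℕ → L → L → L → L} (hf : ∀ i, IsTrilin F (f i)) (x z : L)
    (t : LTSeries3 L) : Ft f (dser 0 x) t (dser 0 z) = Gt (fun p u => f p x u z) t := by
  funext n
  refine ext1 (n := n) (T1 := fun t => Ft f (dser 0 x) t (dser 0 z) n)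
    (T2 := fun t => Gt (fun p u => f p x u z) t n)
    (fun u v => by show Ft f _ (u + v) _ n = _; rw [ft_add2 (fun p => tri_add2 (hf p))]; rfl)
    (fun u v => by show Gt _ (u + v) n = _; rw [gt_add (fun p a b => tri_add2 (hf p) x a b z)]; rfl)
    (fun u v h => ft_low (fun _ _ => rfl) h (fun _ _ => rfl))
    (fun u v h => gt_low h)
    ?_ t
  intro j y hj
  show Ft f (dser 0 x) (dser j y) (dser 0 z) n = Gt (fun p u => f p x u z) (dser j y) n
  rw [ft_delta (fun p => tri_zero1 (hf p)) (fun p => tri_zero2 (hf p)) (fun p => tri_zero3 (hf p)),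
    gt_dser (fun p => tri_zero2 (hf p) x z)]
  norm_num

lemma ft_slot3 {f : ℕ → L → L → L → L} (hf : ∀ i, IsTrilin F (f i)) (x y : L)
    (t : LTSeries3 L) : Ft f (dser 0 x) (dser 0 y) t = Gt (fun p u => f p x y u) t := by
  funext n
  refine ext1 (n := n) (T1 := fun t => Ft f (dser 0 x) (dser 0 y) t n)
    (T2 := fun t => Gt (fun p u => f p x y u) t n)
    (fun u v => by show Ft f _ _ (u + v) n = _; rw [ft_add3 (fun p => tri_add3 (hf p))]; rfl)
    (fun u v => by show Gt _ (u + v) n = _; rw [gt_add (fun p a b => tri_add3 (hf p) x y a b)]; rfl)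
    (fun u v h => ft_low (fun _ _ => rfl) (fun _ _ => rfl) h)
    (fun u v h => gt_low h)
    ?_ t
  intro l z hl
  show Ft f (dser 0 x) (dser 0 y) (dser l z) n = Gt (fun p u => f p x y u) (dser l z) n
  rw [ft_delta (fun p => tri_zero1 (hf p)) (fun p => tri_zero2 (hf p)) (fun p => tri_zero3 (hf p)),
    gt_dser (fun p => tri_zero3 (hf p) x y)]
  norm_num

lemma ft_dser000 {f : ℕ → L → L → L → L} (hf : ∀ i, IsTrilin F (f i)) (x y z : L) :
    Ft f (dser 0 x) (dser 0 y) (dser 0 z) = fun m => f m x y z := by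
  rw [ft_delta (fun p => tri_zero1 (hf p)) (fun p => tri_zero2 (hf p))
    (fun p => tri_zero3 (hf p)), show (0 + 0 + 0 : ℕ) = 0 from rfl, shf_zero]

lemma Dcoef {f : ℕ → L → L → L → L} (hf : ∀ i, IsTrilin F (f i)) (hFI : FundId (Ft f))
    (n : ℕ) (x1 x2 x3 x4 x5 : L) :
    ∑ p ∈ range (n + 1), f p x1 x2 (f (n - p) x3 x4 x5)
    = (∑ p ∈ range (n + 1), f p (f (n - p) x1 x2 x3) x4 x5)
      + (∑ p ∈ range (n + 1), f p x3 (f (n - p) x1 x2 x4) x5)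
      + (∑ p ∈ range (n + 1), f p x3 x4 (f (n - p) x1 x2 x5)) := by
  have key := hFI (dser 0 x1) (dser 0 x2) (dser 0 x3) (dser 0 x4) (dser 0 x5)
  rw [ft_dser000 hf x3 x4 x5, ft_dser000 hf x1 x2 x3, ft_dser000 hf x1 x2 x4,
    ft_dser000 hf x1 x2 x5, ft_slot3 hf x1 x2, ft_slot1 hf x4 x5, ft_slot2 hf x3 x5,
    ft_slot3 hf x3 x4] at key
  have h := congrFun key n
  simpa only [Pi.add_apply, Gt] using h

lemma Ecoef {f : ℕ → L → L → L → L} {g : ℕ → L → L} (hf : ∀ i, IsTrilin F (f i))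
    (hg : ∀ i, IsLinearMap F (g i)) (hD : IsDeriv3 (Ft f) (Gt g)) (n : ℕ) (x y z : L) :
    ∑ p ∈ range (n + 1), g p (f (n - p) x y z)
    = (∑ p ∈ range (n + 1), f p (g (n - p) x) y z)
      + (∑ p ∈ range (n + 1), f p x (g (n - p) y) z)
      + (∑ p ∈ range (n + 1), f p x y (g (n - p) z)) := by
  have hg0 : ∀ p, g p 0 = 0 := fun p => (hg p).map_zero
  have key := hD (dser 0 x) (dser 0 y) (dser 0 z)
  rw [ft_dser000 hf x y z, gt_dser hg0 0 x, gt_dser hg0 0 y, gt_dser hg0 0 z,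
    shf_zero, shf_zero, shf_zero, ft_slot1 hf y z, ft_slot2 hf x z, ft_slot3 hf x y] at key
  have h := congrFun key n
  simpa only [Pi.add_apply, Gt] using h

lemma skew_cyc {t : L → L → L → L} (hsk : SkewTri t) (x y z : L) : t x y z = t y z x := by
  rw [hsk.1 x y z, hsk.2 y z x]

end ModAux


lemma dser_add (i : ℕ) (x y : L) : dser i (x + y) = dser i x + dser i y := by
  funext m
  simp only [dser, Pi.add_apply]
  split_ifs <;> simp

lemma sum_single_support {M : Type*} [AddCommGroup M] (T : ℕ → M) (m a : ℕ) (ha : a ≤ m)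
    (hvan : ∀ p ≤ m, p ≠ a → T p = 0) : ∑ p ∈ range (m + 1), T p = T a := by
  rw [Finset.sum_eq_single_of_mem a (by simp; omega)]
  intro p hp hpa
  exact hvan p (by simp at hp; omega) hpa

lemma sum_pair_support {M : Type*} [AddCommGroup M] (T : ℕ → M) (m a b : ℕ)
    (ha : a ≤ m) (hb : b ≤ m) (hab : a ≠ b)
    (hvan : ∀ p ≤ m, p ≠ a → p ≠ b → T p = 0) :
    ∑ p ∈ range (m + 1), T p = T a + T b := by
  rw [← Finset.sum_pair hab]
  refine (Finset.sum_subset ?_ ?_).symm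
  · intro p hp
    simp only [Finset.mem_insert, Finset.mem_singleton] at hp
    simp only [Finset.mem_range]
    omega
  · intro p hp hpn
    simp only [Finset.mem_insert, Finset.mem_singleton, not_or] at hpn
    exact hvan p (by simp at hp; omega) hpn.1 hpn.2

section ModAux2

variable {F : Type*} [Field F] [Module F L]

lemma dser_smul (i : ℕ) (r : F) (x : L) : dser i (r • x) = r • dser i x := by
  funext m
  simp only [dser, Pi.smul_apply]
  split_ifs <;> simp

lemma convf_lin {α β : ℕ → L → L} (hα : ∀ p, IsLinearMap F (α p))
    (hβ : ∀ p, IsLinearMap F (β p)) (m : ℕ) : IsLinearMap F (convf α β m) := by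
  constructor
  · intro x y
    simp only [convf, (hβ _).map_add, (hα _).map_add, Finset.sum_add_distrib]
  · intro r x
    simp only [convf, (hβ _).map_smul, (hα _).map_smul, Finset.smul_sum]

lemma iter_lin {χ : L → L} (hχ : IsLinearMap F χ) (j : ℕ) :
    IsLinearMap F (fun x => χ^[j] x) := by
  induction j with
  | zero => exact ⟨fun a b => by simp, fun r a => by simp⟩
  | succ n ih =>
      constructor
      · intro a b
        simp only [Function.iterate_succ_apply']
        rw [show χ^[n] (a + b) = χ^[n] a + χ^[n] b from ih.map_add a b, hχ.map_add]
      · intro r a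
        simp only [Function.iterate_succ_apply']
        rw [show χ^[n] (r • a) = r • χ^[n] a from ih.map_smul r a, hχ.map_smul]

end ModAux2


section StepSec

variable {F : Type*} [Field F] [Module F L]

lemma rigidity_step
    (bracket : L → L → L → L) (hb3 : IsTrilin F bracket) (hbskew : SkewTri bracket)
    (θ : L → L)
    (hH2 : ∀ (ψ : L → L → L → L) (lam : L → L),
        IsTrilin F ψ → SkewTri ψ → IsLinearMap F lam →
        d2c bracket bracket ψ = 0 →
        d1c bracket bracket lam + delta2c θ θ ψ = 0 →
        ∃ χ : L → L, IsLinearMap F χ ∧ ψ = d1c bracket bracket χ ∧ lam = - delta1c θ θ χ)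
    (k : ℕ) (f : ℕ → L → L → L → L) (g : ℕ → L → L)
    (hdef : IsDeformation F bracket θ f g)
    (htriv : ∀ m, 0 < m → m ≤ k → f m = 0 ∧ g m = 0) :
    ∃ (f' : ℕ → L → L → L → L) (g' : ℕ → L → L) (w : ℕ → L → L),
      IsDeformation F bracket θ f' g' ∧
      (∀ m, 0 < m → m ≤ k + 1 → f' m = 0 ∧ g' m = 0) ∧
      w 0 = (fun x => x) ∧ (∀ i, IsLinearMap F (w i)) ∧
      (∀ i, 0 < i → i ≠ k + 1 → w i = 0) ∧
      (∀ a b c : LTSeries3 L, Gt w (Ft f' a b c) = Ft f (Gt w a) (Gt w b) (Gt w c)) ∧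
      (∀ a : LTSeries3 L, Gt w (Gt g' a) = Gt g (Gt w a)) := by
  classical
  obtain ⟨hf0, hg0, hftri, hfskew, hglin, hFI, hDer⟩ := hdef
  set K := k + 1 with hKdef
  have hKpos : 0 < K := Nat.succ_pos k
  have hfa1 : ∀ p (x x' y z : L), f p (x + x') y z = f p x y z + f p x' y z :=
    fun p => tri_add1 (hftri p)
  have hfa2 : ∀ p (x y y' z : L), f p x (y + y') z = f p x y z + f p x y' z :=
    fun p => tri_add2 (hftri p)
  have hfa3 : ∀ p (x y z z' : L), f p x y (z + z') = f p x y z + f p x y z' :=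
    fun p => tri_add3 (hftri p)
  have hfz1 : ∀ p (y z : L), f p 0 y z = 0 := fun p => tri_zero1 (hftri p)
  have hfz2 : ∀ p (x z : L), f p x 0 z = 0 := fun p => tri_zero2 (hftri p)
  have hfz3 : ∀ p (x y : L), f p x y 0 = 0 := fun p => tri_zero3 (hftri p)
  have hfmid : ∀ p, 0 < p → p < K → f p = 0 := fun p h1 h2 => (htriv p h1 (by omega)).1
  have hgmid : ∀ p, 0 < p → p < K → g p = 0 := fun p h1 h2 => (htriv p h1 (by omega)).2
  -- the obstruction `(f K, g K)` is a 2-cocycle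
  have hd2 : d2c bracket bracket (f K) = 0 := by
    funext x1 x2 x3 x4 z
    have D := Dcoef hftri hFI K x1 x2 x3 x4 z
    rw [sum_pair_support (fun p => f p x1 x2 (f (K - p) x3 x4 z)) K 0 K (by omega) le_rfl
        (by omega) (fun p h1 h2 h3 => by simp [hfmid p (by omega) (by omega)]),
      sum_pair_support (fun p => f p (f (K - p) x1 x2 x3) x4 z) K 0 K (by omega) le_rfl
        (by omega) (fun p h1 h2 h3 => by simp [hfmid p (by omega) (by omega)]),
      sum_pair_support (fun p => f p x3 (f (K - p) x1 x2 x4) z) K 0 K (by omega) le_rfl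
        (by omega) (fun p h1 h2 h3 => by simp [hfmid p (by omega) (by omega)]),
      sum_pair_support (fun p => f p x3 x4 (f (K - p) x1 x2 z)) K 0 K (by omega) le_rfl
        (by omega) (fun p h1 h2 h3 => by simp [hfmid p (by omega) (by omega)])] at D
    simp only [Nat.sub_zero, Nat.sub_self, hf0] at D
    show -(f K) (bracket x1 x2 x3) x4 z - (f K) x3 (bracket x1 x2 x4) z
      - (f K) x3 x4 (bracket x1 x2 z) + (f K) x1 x2 (bracket x3 x4 z)
      + bracket x1 x2 ((f K) x3 x4 z) - bracket x3 x4 ((f K) x1 x2 z)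
      - bracket x4 z ((f K) x1 x2 x3) + bracket x3 z ((f K) x1 x2 x4) = 0
    rw [← skew_cyc hbskew (f K x1 x2 x3) x4 z, hbskew.2 x3 z (f K x1 x2 x4)]
    rw [← sub_eq_zero_of_eq D]
    abel
  have hd1 : d1c bracket bracket (g K) + delta2c θ θ (f K) = 0 := by
    funext x y z
    have E := Ecoef hftri hglin hDer K x y z
    rw [sum_pair_support (fun p => g p (f (K - p) x y z)) K 0 K (by omega) le_rfl
        (by omega) (fun p h1 h2 h3 => by simp [hgmid p (by omega) (by omega)]),
      sum_pair_support (fun p => f p (g (K - p) x) y z) K 0 K (by omega) le_rfl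
        (by omega) (fun p h1 h2 h3 => by simp [hfmid p (by omega) (by omega)]),
      sum_pair_support (fun p => f p x (g (K - p) y) z) K 0 K (by omega) le_rfl
        (by omega) (fun p h1 h2 h3 => by simp [hfmid p (by omega) (by omega)]),
      sum_pair_support (fun p => f p x y (g (K - p) z)) K 0 K (by omega) le_rfl
        (by omega) (fun p h1 h2 h3 => by simp [hfmid p (by omega) (by omega)])] at E
    simp only [Nat.sub_zero, Nat.sub_self, hf0, hg0] at E
    show bracket x y ((g K) z) - (g K) (bracket x y z) + bracket y z ((g K) x)
      - bracket x z ((g K) y)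
      + ((f K) (θ x) y z + (f K) x (θ y) z + (f K) x y (θ z) - θ ((f K) x y z)) = 0
    rw [← skew_cyc hbskew (g K x) y z, hbskew.2 x z (g K y)]
    rw [← sub_eq_zero_of_eq E.symm]
    abel
  obtain ⟨χ, hχlin, hχd, hχδ⟩ := hH2 (f K) (g K) (hftri K) (hfskew K) (hglin K) hd2 hd1
  -- the twist `Ψ = id - χ tᴷ` and its inverse
  set w : ℕ → L → L :=
    fun i => if i = 0 then (fun x => x) else if i = K then (fun x => -χ x) else 0 with hwdef
  set v : ℕ → L → L :=
    fun i => if K ∣ i then (fun x => χ^[i / K] x) else 0 with hvdef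
  have hw0fun : w 0 = fun x => x := by simp [hwdef]
  have hwK : w K = fun x => -χ x := by rw [hwdef]; simp [hKpos.ne']
  have hwother : ∀ i, i ≠ 0 → i ≠ K → w i = 0 := by
    intro i h1 h2; rw [hwdef]; simp [h1, h2]
  have hwlin : ∀ i, IsLinearMap F (w i) := by
    intro i
    rw [hwdef]
    dsimp only
    split_ifs
    · exact ⟨fun a b => rfl, fun r a => rfl⟩
    · exact ⟨fun a b => by rw [hχlin.map_add, neg_add],
        fun r a => by rw [hχlin.map_smul, smul_neg]⟩
    · exact ⟨fun a b => by simp, fun r a => by simp⟩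
  have hwadd : ∀ p (x y : L), w p (x + y) = w p x + w p y := fun p => (hwlin p).map_add
  have hwzero : ∀ p, w p 0 = 0 := fun p => (hwlin p).map_zero
  have hv0fun : v 0 = fun x => x := by rw [hvdef]; simp
  have hvK : v K = fun x => χ x := by
    rw [hvdef]; simp [Nat.div_self hKpos]
  have hvmid : ∀ i, ¬ K ∣ i → v i = 0 := by
    intro i hi; rw [hvdef]; simp [hi]
  have hvlin : ∀ i, IsLinearMap F (v i) := by
    intro i
    rw [hvdef]
    dsimp only
    split_ifs
    · exact iter_lin hχlin _
    · exact ⟨fun a b => by simp, fun r a => by simp⟩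
  have hvadd : ∀ p (x y : L), v p (x + y) = v p x + v p y := fun p => (hvlin p).map_add
  have hvzero : ∀ p, v p 0 = 0 := fun p => (hvlin p).map_zero
  have hw0ap : ∀ u : L, w 0 u = u := fun u => by rw [hw0fun]
  have hwKap : ∀ u : L, w K u = -χ u := fun u => by rw [hwK]
  have hv0ap : ∀ u : L, v 0 u = u := fun u => by rw [hv0fun]
  have hvKap : ∀ u : L, v K u = χ u := fun u => by rw [hvK]
  have hiterneg : ∀ j (u : L), χ^[j] (-u) = -χ^[j] u := fun j u => by
    simpa using (iter_lin hχlin j).map_neg u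
  have hvmul : ∀ j (u : L), v (K * j) u = χ^[j] u := by
    intro j u
    rw [hvdef]
    simp [dvd_mul_right, Nat.mul_div_cancel_left _ hKpos]
  have hθneg : ∀ u : L, θ (-u) = -θ u := fun u => by
    rw [← hg0]; exact (hglin 0).map_neg u
  have hconvwv : ∀ s : LTSeries3 L, Gt w (Gt v s) = s := by
    have hc : convf w v = idf := by
      funext m x
      show ∑ p ∈ range (m + 1), w p (v (m - p) x) = idf m x
      rcases Nat.eq_zero_or_pos m with hm | hm
      · subst hm
        rw [Finset.sum_range_one]
        show w 0 (v 0 x) = idf 0 x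
        rw [hv0ap, hw0ap]
        rfl
      · rw [show idf m x = 0 from by simp [idf, hm.ne']]
        by_cases hKm : K ≤ m
        · rw [sum_pair_support _ m 0 K (by omega) (by omega) (by omega)
            (fun p hpm hp0 hpK => by
              show w p (v (m - p) x) = 0
              rw [hwother p hp0 hpK]; rfl)]
          show w 0 (v m x) + w K (v (m - K) x) = 0
          rw [hw0ap, hwKap]
          by_cases hdvd : K ∣ m
          · obtain ⟨j, rfl⟩ := hdvd
            have hj1 : j ≠ 0 := by rintro rfl; simp at hm
            obtain ⟨j', rfl⟩ := Nat.exists_eq_succ_of_ne_zero hj1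
            rw [show K * (j' + 1) - K = K * j' from by rw [Nat.mul_succ]; omega,
              hvmul, hvmul, Function.iterate_succ_apply' χ j' x]
            abel
          · have h2 : ¬ K ∣ (m - K) := by
              intro h
              obtain ⟨j, hj⟩ := h
              exact hdvd ⟨j + 1, by rw [Nat.mul_succ]; omega⟩
            rw [hvmid m hdvd, hvmid _ h2]
            simp [hχlin.map_zero]
        · rw [sum_single_support _ m 0 (by omega)
            (fun p hpm hp0 => by
              show w p (v (m - p) x) = 0
              rw [hwother p hp0 (by omega)]; rfl)]
          show w 0 (v m x) = 0
          rw [hvmid m (fun hd => absurd (Nat.le_of_dvd hm hd) hKm), hw0ap]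
          rfl
    intro s
    rw [← gt_conv hwadd hwzero hvadd hvzero s, hc, gt_idf]
  have hconvvw : ∀ s : LTSeries3 L, Gt v (Gt w s) = s := by
    have hc : convf v w = idf := by
      funext m x
      show ∑ p ∈ range (m + 1), v p (w (m - p) x) = idf m x
      rcases Nat.eq_zero_or_pos m with hm | hm
      · subst hm
        rw [Finset.sum_range_one]
        show v 0 (w 0 x) = idf 0 x
        rw [hw0ap, hv0ap]
        rfl
      · rw [show idf m x = 0 from by simp [idf, hm.ne']]
        by_cases hKm : K ≤ m
        · rw [sum_pair_support _ m (m - K) m (by omega) le_rfl (by omega)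
            (fun p hpm hp1 hp2 => by
              show v p (w (m - p) x) = 0
              rw [hwother (m - p) (by omega) (by omega)]
              simp [hvzero])]
          show v (m - K) (w (m - (m - K)) x) + v m (w (m - m) x) = 0
          rw [show m - (m - K) = K from by omega, Nat.sub_self, hw0ap, hwKap]
          by_cases hdvd : K ∣ m
          · obtain ⟨j, rfl⟩ := hdvd
            have hj1 : j ≠ 0 := by rintro rfl; simp at hm
            obtain ⟨j', rfl⟩ := Nat.exists_eq_succ_of_ne_zero hj1
            rw [show K * (j' + 1) - K = K * j' from by rw [Nat.mul_succ]; omega,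
              hvmul, hvmul, hiterneg, ← Function.iterate_succ_apply χ j' x]
            abel
          · have h2 : ¬ K ∣ (m - K) := by
              intro h
              obtain ⟨j, hj⟩ := h
              exact hdvd ⟨j + 1, by rw [Nat.mul_succ]; omega⟩
            rw [hvmid m hdvd, hvmid _ h2]
            simp
        · rw [sum_single_support _ m m le_rfl
            (fun p hpm hpne => by
              show v p (w (m - p) x) = 0
              rw [hwother (m - p) (by omega) (by omega)]
              simp [hvzero])]
          show v m (w (m - m) x) = 0
          rw [Nat.sub_self, hw0ap, hvmid m (fun hd => absurd (Nat.le_of_dvd hm hd) hKm)]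
          rfl
    intro s
    rw [← gt_conv hvadd hvzero hwadd hwzero s, hc, gt_idf]
  -- the action of `Ψ` on monomials, and the 8-term expansion
  have hWd : ∀ (i : ℕ) (x : L), Gt w (dser i x) = dser i x + dser (i + K) (-χ x) := by
    intro i x
    rw [gt_dser hwzero i x]
    have : (fun m => w m x) = dser 0 x + dser K (-χ x) := by
      funext m
      simp only [dser, Pi.add_apply, hwdef]
      split_ifs <;> first | omega | simp
    rw [this, shf_add, shf_dser, shf_dser, Nat.add_zero]
  have hexp : ∀ (i j l : ℕ) (x y z : L),
      Ft f (Gt w (dser i x)) (Gt w (dser j y)) (Gt w (dser l z)) =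
      shf (i + j + l) (fun m => f m x y z)
      + shf (i + j + l + K) (fun m => f m (-χ x) y z)
      + shf (i + j + l + K) (fun m => f m x (-χ y) z)
      + shf (i + j + l + K) (fun m => f m x y (-χ z))
      + shf (i + j + l + K + K) (fun m => f m (-χ x) (-χ y) z)
      + shf (i + j + l + K + K) (fun m => f m (-χ x) y (-χ z))
      + shf (i + j + l + K + K) (fun m => f m x (-χ y) (-χ z))
      + shf (i + j + l + K + K + K) (fun m => f m (-χ x) (-χ y) (-χ z)) := by
    intro i j l x y z
    rw [hWd i x, hWd j y, hWd l z]
    simp only [ft_add1 hfa1, ft_add2 hfa2, ft_add3 hfa3, ft_delta hfz1 hfz2 hfz3]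
    rw [shf_congr (show i + j + (l + K) = i + j + l + K from by omega),
      shf_congr (show i + (j + K) + l = i + j + l + K from by omega),
      shf_congr (show i + (j + K) + (l + K) = i + j + l + K + K from by omega),
      shf_congr (show i + K + j + l = i + j + l + K from by omega),
      shf_congr (show i + K + j + (l + K) = i + j + l + K + K from by omega),
      shf_congr (show i + K + (j + K) + l = i + j + l + K + K from by omega),
      shf_congr (show i + K + (j + K) + (l + K) = i + j + l + K + K + K from by omega)]
    abel
  have hGv8 : ∀ (i j l : ℕ) (x y z : L),
      Gt v (Ft f (Gt w (dser i x)) (Gt w (dser j y)) (Gt w (dser l z))) =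
      shf (i + j + l) (Gt v (fun m => f m x y z))
      + shf (i + j + l + K) (Gt v (fun m => f m (-χ x) y z))
      + shf (i + j + l + K) (Gt v (fun m => f m x (-χ y) z))
      + shf (i + j + l + K) (Gt v (fun m => f m x y (-χ z)))
      + shf (i + j + l + K + K) (Gt v (fun m => f m (-χ x) (-χ y) z))
      + shf (i + j + l + K + K) (Gt v (fun m => f m (-χ x) y (-χ z)))
      + shf (i + j + l + K + K) (Gt v (fun m => f m x (-χ y) (-χ z)))
      + shf (i + j + l + K + K + K) (Gt v (fun m => f m (-χ x) (-χ y) (-χ z))) := by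
    intro i j l x y z
    rw [hexp i j l x y z]
    simp only [gt_add hvadd, gt_shf hvzero]
  -- the transported deformation
  set f' : ℕ → L → L → L → L := fun m x y z =>
    Gt v (Ft f (Gt w (dser 0 x)) (Gt w (dser 0 y)) (Gt w (dser 0 z))) m with hf'def
  set g' : ℕ → L → L := convf v (convf g w) with hg'def
  have hf'ser : ∀ x y z : L, (fun m => f' m x y z) =
      Gt v (Ft f (Gt w (dser 0 x)) (Gt w (dser 0 y)) (Gt w (dser 0 z))) := by
    intro x y z; rfl
  have hf'tri : ∀ m, IsTrilin F (f' m) := by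
    intro m
    refine ⟨fun y z => ⟨fun x x' => ?_, fun r x => ?_⟩,
      fun x z => ⟨fun y y' => ?_, fun r y => ?_⟩,
      fun x y => ⟨fun z z' => ?_, fun r z => ?_⟩⟩
    · show f' m (x + x') y z = f' m x y z + f' m x' y z
      rw [hf'def]
      simp only []
      rw [dser_add, gt_add hwadd, ft_add1 hfa1, gt_add hvadd]
      rfl
    · show f' m (r • x) y z = r • f' m x y z
      rw [hf'def]
      simp only []
      rw [dser_smul, gt_smul hwlin, ft_smul1 hftri, gt_smul hvlin]
      rfl
    · show f' m x (y + y') z = f' m x y z + f' m x y' z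
      rw [hf'def]
      simp only []
      rw [dser_add, gt_add hwadd, ft_add2 hfa2, gt_add hvadd]
      rfl
    · show f' m x (r • y) z = r • f' m x y z
      rw [hf'def]
      simp only []
      rw [dser_smul, gt_smul hwlin, ft_smul2 hftri, gt_smul hvlin]
      rfl
    · show f' m x y (z + z') = f' m x y z + f' m x y z'
      rw [hf'def]
      simp only []
      rw [dser_add, gt_add hwadd, ft_add3 hfa3, gt_add hvadd]
      rfl
    · show f' m x y (r • z) = r • f' m x y z
      rw [hf'def]
      simp only []
      rw [dser_smul, gt_smul hwlin, ft_smul3 hftri, gt_smul hvlin]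
      rfl
  have hf'skew : ∀ m, SkewTri (f' m) := by
    intro m
    constructor
    · intro x y z
      show f' m x y z = - f' m y x z
      rw [hf'def]
      simp only []
      rw [ft_skew12 hftri hfskew (Gt w (dser 0 x)) (Gt w (dser 0 y)) (Gt w (dser 0 z)),
        gt_neg hvadd]
      rfl
    · intro x y z
      show f' m x y z = - f' m x z y
      rw [hf'def]
      simp only []
      rw [ft_skew23 hftri hfskew (Gt w (dser 0 x)) (Gt w (dser 0 y)) (Gt w (dser 0 z)),
        gt_neg hvadd]
      rfl
  have hf'a1 : ∀ p (x x' y z : L), f' p (x + x') y z = f' p x y z + f' p x' y z :=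
    fun p => tri_add1 (hf'tri p)
  have hf'a2 : ∀ p (x y y' z : L), f' p x (y + y') z = f' p x y z + f' p x y' z :=
    fun p => tri_add2 (hf'tri p)
  have hf'a3 : ∀ p (x y z z' : L), f' p x y (z + z') = f' p x y z + f' p x y z' :=
    fun p => tri_add3 (hf'tri p)
  have hSI : ∀ a b c : LTSeries3 L,
      Ft f' a b c = Gt v (Ft f (Gt w a) (Gt w b) (Gt w c)) := by
    intro a b c
    funext n
    refine ext3 (n := n) (T1 := fun a b c => Ft f' a b c n)
      (T2 := fun a b c => Gt v (Ft f (Gt w a) (Gt w b) (Gt w c)) n)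
      (fun u u' bb cc => by
        show Ft f' (u + u') bb cc n = Ft f' u bb cc n + Ft f' u' bb cc n
        rw [ft_add1 hf'a1]; rfl)
      (fun u bb bb' cc => by
        show Ft f' u (bb + bb') cc n = Ft f' u bb cc n + Ft f' u bb' cc n
        rw [ft_add2 hf'a2]; rfl)
      (fun u bb cc cc' => by
        show Ft f' u bb (cc + cc') n = Ft f' u bb cc n + Ft f' u bb cc' n
        rw [ft_add3 hf'a3]; rfl)
      (fun u u' bb cc => by
        show Gt v (Ft f (Gt w (u + u')) (Gt w bb) (Gt w cc)) n = _
        rw [gt_add hwadd, ft_add1 hfa1, gt_add hvadd]; rfl)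
      (fun u bb bb' cc => by
        show Gt v (Ft f (Gt w u) (Gt w (bb + bb')) (Gt w cc)) n = _
        rw [gt_add hwadd, ft_add2 hfa2, gt_add hvadd]; rfl)
      (fun u bb cc cc' => by
        show Gt v (Ft f (Gt w u) (Gt w bb) (Gt w (cc + cc'))) n = _
        rw [gt_add hwadd, ft_add3 hfa3, gt_add hvadd]; rfl)
      (fun u u' bb bb' cc cc' h1 h2 h3 => ft_low h1 h2 h3)
      (fun u u' bb bb' cc cc' h1 h2 h3 => by
        show Gt v (Ft f (Gt w u) (Gt w bb) (Gt w cc)) n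
          = Gt v (Ft f (Gt w u') (Gt w bb') (Gt w cc')) n
        refine gt_low (fun m hm => ft_low
          (fun m1 hm1 => gt_low (fun m2 hm2 => h1 m2 (by omega)))
          (fun m1 hm1 => gt_low (fun m2 hm2 => h2 m2 (by omega)))
          (fun m1 hm1 => gt_low (fun m2 hm2 => h3 m2 (by omega)))))
      ?_ a b c
    intro i j l x y z hi hj hl
    show Ft f' (dser i x) (dser j y) (dser l z) n
      = Gt v (Ft f (Gt w (dser i x)) (Gt w (dser j y)) (Gt w (dser l z))) n
    rw [ft_delta (fun p => tri_zero1 (hf'tri p)) (fun p => tri_zero2 (hf'tri p))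
      (fun p => tri_zero3 (hf'tri p)) i j l x y z, hGv8 i j l x y z]
    rw [show (fun m => f' m x y z)
      = Gt v (Ft f (Gt w (dser 0 x)) (Gt w (dser 0 y)) (Gt w (dser 0 z))) from rfl]
    rw [hGv8 0 0 0 x y z]
    simp only [shf_add, shf_shf, Pi.add_apply]
    simp only [show i + j + l + (0 + 0 + 0) = i + j + l from by omega,
      show i + j + l + (0 + 0 + 0 + K) = i + j + l + K from by omega,
      show i + j + l + (0 + 0 + 0 + K + K) = i + j + l + K + K from by omega,
      show i + j + l + (0 + 0 + 0 + K + K + K) = i + j + l + K + K + K from by omega]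
  have hrel1 : ∀ a b c : LTSeries3 L,
      Gt w (Ft f' a b c) = Ft f (Gt w a) (Gt w b) (Gt w c) := by
    intro a b c
    rw [hSI, hconvwv]
  have hg'lin : ∀ i, IsLinearMap F (g' i) := by
    rw [hg'def]
    exact fun i => convf_lin hvlin (convf_lin hglin hwlin) i
  have hrelg : ∀ a : LTSeries3 L, Gt g' a = Gt v (Gt g (Gt w a)) := by
    intro a
    rw [hg'def, gt_conv hvadd hvzero
      (fun p => (convf_lin hglin hwlin p).map_add) (fun p => (convf_lin hglin hwlin p).map_zero),
      gt_conv (fun p => (hglin p).map_add) (fun p => (hglin p).map_zero) hwadd hwzero]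
  have hrel2 : ∀ a : LTSeries3 L, Gt w (Gt g' a) = Gt g (Gt w a) := by
    intro a
    rw [hrelg, hconvwv]
  -- FundId and derivation property transport
  have hFI' : FundId (Ft f') := by
    intro a1 a2 a3 a4 a5
    rw [hSI a3 a4 a5, hSI a1 a2, hconvwv, hFI (Gt w a1) (Gt w a2) (Gt w a3) (Gt w a4) (Gt w a5),
      gt_add hvadd, gt_add hvadd]
    rw [hSI (Ft f' a1 a2 a3) a4 a5, hSI a1 a2 a3, hconvwv,
      hSI a3 (Ft f' a1 a2 a4) a5, hSI a1 a2 a4, hconvwv,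
      hSI a3 a4 (Ft f' a1 a2 a5), hSI a1 a2 a5, hconvwv]
  have hDer' : IsDeriv3 (Ft f') (Gt g') := by
    intro a b c
    rw [hrelg, hSI a b c, hconvwv, hDer (Gt w a) (Gt w b) (Gt w c),
      gt_add hvadd, gt_add hvadd]
    rw [hSI (Gt g' a) b c, hrelg a, hconvwv,
      hSI a (Gt g' b) c, hrelg b, hconvwv,
      hSI a b (Gt g' c), hrelg c, hconvwv]
  -- low coefficients of `f'` and `g'`
  have hbneg1 : ∀ u y z : L, bracket (-u) y z = -bracket u y z := fun u y z => by
    simpa using (hb3.1 y z).map_neg u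
  have hbneg2 : ∀ x u z : L, bracket x (-u) z = -bracket x u z := fun x u z => by
    simpa using (hb3.2.1 x z).map_neg u
  have hbneg3 : ∀ x y u : L, bracket x y (-u) = -bracket x y u := fun x y u => by
    simpa using (hb3.2.2 x y).map_neg u
  have hGvF : ∀ (x y z : L) m, m < K → Gt v (fun m' => f m' x y z) m = f m x y z := by
    intro x y z m hm
    rw [gt_apply, sum_single_support _ m 0 (by omega)
      (fun p hpm hp0 => by
        show v p (f (m - p) x y z) = 0
        rw [hvmid p (fun hd => absurd (Nat.le_of_dvd (by omega) hd) (by omega))]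
        rfl)]
    show v 0 (f (m - 0) x y z) = f m x y z
    rw [Nat.sub_zero, hv0ap]
  have hGvFK : ∀ x y z : L,
      Gt v (fun m' => f m' x y z) K = f K x y z + χ (bracket x y z) := by
    intro x y z
    rw [gt_apply, sum_pair_support _ K 0 K (by omega) le_rfl (by omega)
      (fun p hpm hp0 hpK => by
        show v p (f (K - p) x y z) = 0
        rw [hvmid p (fun hd => absurd (Nat.le_of_dvd (by omega) hd) (by omega))]
        rfl)]
    show v 0 (f (K - 0) x y z) + v K (f (K - K) x y z) = _
    rw [Nat.sub_zero, Nat.sub_self, hv0ap, hvKap, hf0]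
  have hshfKz : ∀ (t : LTSeries3 L) (s m : ℕ), m < s → shf s t m = 0 := by
    intro t s m hms
    simp only [shf]
    rw [if_neg (by omega)]
  have hf'lt : ∀ m, m < K → ∀ x y z : L, f' m x y z = f m x y z := by
    intro m hm x y z
    show Gt v (Ft f (Gt w (dser 0 x)) (Gt w (dser 0 y)) (Gt w (dser 0 z))) m = f m x y z
    rw [hGv8 0 0 0 x y z]
    simp only [Pi.add_apply,
      show (0 : ℕ) + 0 + 0 = 0 from rfl,
      show (0 : ℕ) + 0 + 0 + K = K from by omega,
      show (0 : ℕ) + 0 + 0 + K + K = K + K from by omega,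
      show (0 : ℕ) + 0 + 0 + K + K + K = K + K + K from by omega]
    rw [hshfKz _ K m hm, hshfKz _ K m hm, hshfKz _ K m hm,
      hshfKz _ (K + K) m (by omega), hshfKz _ (K + K) m (by omega),
      hshfKz _ (K + K) m (by omega), hshfKz _ (K + K + K) m (by omega), shf_zero]
    rw [hGvF x y z m hm]
    abel
  have hf'low : (f' 0 = bracket) ∧ (∀ m, 0 < m → m ≤ K → f' m = 0) := by
    constructor
    · funext x y z
      rw [hf'lt 0 hKpos x y z, hf0]
    · intro m h1 h2
      rcases Nat.lt_or_ge m K with hm | hm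
      · funext x y z
        rw [hf'lt m hm x y z, hfmid m h1 hm]
      · have hmK : m = K := by omega
        funext x y z
        rw [hmK]
        show Gt v (Ft f (Gt w (dser 0 x)) (Gt w (dser 0 y)) (Gt w (dser 0 z))) K
          = (0 : L → L → L → L) x y z
        rw [hGv8 0 0 0 x y z]
        simp only [Pi.add_apply,
          show (0 : ℕ) + 0 + 0 = 0 from rfl,
          show (0 : ℕ) + 0 + 0 + K = K from by omega,
          show (0 : ℕ) + 0 + 0 + K + K = K + K from by omega,
          show (0 : ℕ) + 0 + 0 + K + K + K = K + K + K from by omega]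
        rw [hshfKz _ (K + K) K (by omega), hshfKz _ (K + K) K (by omega),
          hshfKz _ (K + K) K (by omega), hshfKz _ (K + K + K) K (by omega), shf_zero]
        have hshfKK : ∀ t : LTSeries3 L, shf K t K = t 0 := by
          intro t
          simp only [shf]
          rw [if_pos le_rfl, Nat.sub_self]
        rw [hshfKK, hshfKK, hshfKK, hGvFK, hGvF _ _ _ 0 hKpos, hGvF _ _ _ 0 hKpos,
          hGvF _ _ _ 0 hKpos]
        show f K x y z + χ (bracket x y z) + f 0 (-χ x) y z + f 0 x (-χ y) z
          + f 0 x y (-χ z) + 0 + 0 + 0 + 0 = 0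
        rw [hf0, hbneg1, hbneg2, hbneg3]
        have hfK : f K x y z = d1c bracket bracket χ x y z := by rw [hχd]
        rw [hfK]
        simp only [d1c]
        rw [← skew_cyc hbskew (χ x) y z, hbskew.2 x z (χ y)]
        abel
  have hcgw : ∀ m, m < K → ∀ x : L, convf g w m x = g m x := by
    intro m hm x
    show ∑ p ∈ range (m + 1), g p (w (m - p) x) = g m x
    rw [sum_single_support _ m m le_rfl
      (fun p hpm hpne => by
        show g p (w (m - p) x) = 0
        rw [hwother (m - p) (by omega) (by omega)]
        simp [(hglin p).map_zero])]
    show g m (w (m - m) x) = g m x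
    rw [Nat.sub_self, hw0ap]
  have hcgwK : ∀ x : L, convf g w K x = θ (-χ x) + g K x := by
    intro x
    show ∑ p ∈ range (K + 1), g p (w (K - p) x) = _
    rw [sum_pair_support _ K 0 K (by omega) le_rfl (by omega)
      (fun p hpm hp0 hpK => by
        show g p (w (K - p) x) = 0
        rw [hwother (K - p) (by omega) (by omega)]
        simp [(hglin p).map_zero])]
    show g 0 (w (K - 0) x) + g K (w (K - K) x) = _
    rw [Nat.sub_zero, Nat.sub_self, hwKap, hw0ap, hg0]
  have hg'lt : ∀ m, m < K → ∀ x : L, g' m x = g m x := by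
    intro m hm x
    show ∑ p ∈ range (m + 1), v p (convf g w (m - p) x) = g m x
    rw [sum_single_support _ m 0 (by omega)
      (fun p hpm hp0 => by
        show v p (convf g w (m - p) x) = 0
        rw [hvmid p (fun hd => absurd (Nat.le_of_dvd (by omega) hd) (by omega))]
        rfl)]
    show v 0 (convf g w (m - 0) x) = g m x
    rw [Nat.sub_zero, hv0ap, hcgw m hm]
  have hg'low : (g' 0 = θ) ∧ (∀ m, 0 < m → m ≤ K → g' m = 0) := by
    constructor
    · funext x
      rw [hg'lt 0 hKpos x, ← hg0]
    · intro m h1 h2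
      rcases Nat.lt_or_ge m K with hm | hm
      · funext x
        rw [hg'lt m hm x, hgmid m h1 hm]
      · have hmK : m = K := by omega
        funext x
        rw [hmK]
        show ∑ p ∈ range (K + 1), v p (convf g w (K - p) x) = (0 : L → L) x
        rw [sum_pair_support _ K 0 K (by omega) le_rfl (by omega)
          (fun p hpm hp0 hpK => by
            show v p (convf g w (K - p) x) = 0
            rw [hvmid p (fun hd => absurd (Nat.le_of_dvd (by omega) hd) (by omega))]
            rfl)]
        show v 0 (convf g w (K - 0) x) + v K (convf g w (K - K) x) = 0
        rw [Nat.sub_zero, Nat.sub_self, hv0ap, hvKap, hcgwK x, hcgw 0 hKpos,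
          show g K = - delta1c θ θ χ from hχδ]
        simp only [delta1c, Pi.neg_apply, hg0]
        rw [hθneg]
        abel
  refine ⟨f', g', w, ⟨hf'low.1, hg'low.1, hf'tri, hf'skew, hg'lin, hFI', hDer'⟩,
    fun m h1 h2 => ⟨hf'low.2 m h1 h2, hg'low.2 m h1 h2⟩, hw0fun, hwlin,
    fun i h1 h2 => hwother i (by omega) h2, hrel1, hrel2⟩

end StepSec

end RigidityAux

/-- Let `(L, bracket, θ)` be a 3-LieDer pair.  If
`H²_{3-LieDer}(L;L) = 0` — every 2-cocycle `(ψ, λ)` with coefficients in the adjoint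
representation is a coboundary `∂χ = (dχ, -δχ)` — then `(L, θ)` is rigid: every
one-parameter formal deformation of `(L, θ)` is equivalent to the trivial one
`(f₀, g₀) = (bracket, θ)`. -/
theorem statement12 {F L : Type*} [Field F] [CharZero F]
    [AddCommGroup L] [Module F L] [FiniteDimensional F L]
    (bracket : L → L → L → L) (hb3 : IsTrilin F bracket) (hbskew : SkewTri bracket)
    (hbFI : FundId bracket)
    (θ : L → L) (hθlin : IsLinearMap F θ) (hθ : IsDeriv3 bracket θ)
    (hH2 : ∀ (ψ : L → L → L → L) (lam : L → L),
        IsTrilin F ψ → SkewTri ψ → IsLinearMap F lam →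
        d2c bracket bracket ψ = 0 →
        d1c bracket bracket lam + delta2c θ θ ψ = 0 →
        ∃ χ : L → L, IsLinearMap F χ ∧ ψ = d1c bracket bracket χ ∧ lam = - delta1c θ θ χ) :
    ∀ (f : ℕ → L → L → L → L) (g : ℕ → L → L),
      IsDeformation F bracket θ f g →
      AreEquivDef F f g
        (fun i => if i = 0 then bracket else 0) (fun i => if i = 0 then θ else 0) := by
  classical
  intro f g hdef
  let A := (ℕ → L → L → L → L) × (ℕ → L → L)
  let Pk : ℕ → A → Prop := fun k fg =>
    IsDeformation F bracket θ fg.1 fg.2 ∧ ∀ m, 0 < m → m ≤ k → fg.1 m = 0 ∧ fg.2 m = 0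
  have step : ∀ k (fg : A), Pk k fg → ∃ out : A × (ℕ → L → L),
      Pk (k + 1) out.1 ∧ out.2 0 = (fun x => x) ∧ (∀ i, IsLinearMap F (out.2 i)) ∧
      (∀ i, 0 < i → i ≠ k + 1 → out.2 i = 0) ∧
      (∀ a b c : LTSeries3 L, Gt out.2 (Ft out.1.1 a b c)
        = Ft fg.1 (Gt out.2 a) (Gt out.2 b) (Gt out.2 c)) ∧
      (∀ a : LTSeries3 L, Gt out.2 (Gt out.1.2 a) = Gt fg.2 (Gt out.2 a)) := by
    intro k fg hP
    obtain ⟨f', g', w, h1, h2, h3, h4, h5, h6, h7⟩ :=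
      rigidity_step bracket hb3 hbskew θ hH2 k fg.1 fg.2 hP.1 hP.2
    exact ⟨⟨⟨f', g'⟩, w⟩, ⟨h1, h2⟩, h3, h4, h5, h6, h7⟩
  let T : (k : ℕ) → {fg : A // Pk k fg} := fun k =>
    Nat.rec (motive := fun k => {fg : A // Pk k fg}) ⟨(f, g), hdef, fun m h1 h2 => by
        have hm0 : m = 0 := Nat.le_zero.mp h2
        omega⟩
      (fun k ih => ⟨(Classical.choose (step k ih.1 ih.2)).1,
        (Classical.choose_spec (step k ih.1 ih.2)).1⟩) k
  let W : ℕ → (ℕ → L → L) := fun k => (Classical.choose (step k (T k).1 (T k).2)).2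
  have hspec : ∀ k, Pk (k + 1) (T (k + 1)).1 ∧ (W k) 0 = (fun x => x) ∧
      (∀ i, IsLinearMap F (W k i)) ∧ (∀ i, 0 < i → i ≠ k + 1 → W k i = 0) ∧
      (∀ a b c : LTSeries3 L, Gt (W k) (Ft (T (k + 1)).1.1 a b c)
        = Ft (T k).1.1 (Gt (W k) a) (Gt (W k) b) (Gt (W k) c)) ∧
      (∀ a : LTSeries3 L, Gt (W k) (Gt (T (k + 1)).1.2 a) = Gt (T k).1.2 (Gt (W k) a)) :=
    fun k => Classical.choose_spec (step k (T k).1 (T k).2)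
  have hWlin : ∀ k i, IsLinearMap F (W k i) := fun k => (hspec k).2.2.1
  have hWadd : ∀ k p (x y : L), W k p (x + y) = W k p x + W k p y :=
    fun k p => (hWlin k p).map_add
  have hWzero : ∀ k p, W k p 0 = 0 := fun k p => (hWlin k p).map_zero
  have hW0ap : ∀ k (x : L), W k 0 x = x := fun k x => by rw [(hspec k).2.1]
  let C : ℕ → (ℕ → L → L) := fun N => Nat.rec (motive := fun _ => ℕ → L → L) idf (fun N ih => convf ih (W N)) N
  have hCsucc : ∀ N, C (N + 1) = convf (C N) (W N) := fun N => rfl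
  have hClin : ∀ N i, IsLinearMap F (C N i) := by
    intro N
    induction N with
    | zero =>
        intro i
        show IsLinearMap F (idf i)
        simp only [idf]
        split_ifs
        · exact ⟨fun a b => rfl, fun r a => rfl⟩
        · exact ⟨fun a b => by simp, fun r a => by simp⟩
    | succ N ih =>
        intro i
        exact convf_lin ih (hWlin N) i
  have hCadd : ∀ N p (x y : L), C N p (x + y) = C N p x + C N p y :=
    fun N p => (hClin N p).map_add
  have hCzero : ∀ N p, C N p 0 = 0 := fun N p => (hClin N p).map_zero
  have hCstab : ∀ N m, m ≤ N → C (N + 1) m = C N m := by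
    intro N m hm
    funext x
    show convf (C N) (W N) m x = C N m x
    show ∑ p ∈ range (m + 1), C N p (W N (m - p) x) = C N m x
    rw [sum_single_support _ m m le_rfl
      (fun p hpm hpne => by
        show C N p (W N (m - p) x) = 0
        rw [(hspec N).2.2.2.1 (m - p) (by omega) (by omega)]
        simp [hCzero N p])]
    show C N m (W N (m - m) x) = C N m x
    rw [Nat.sub_self, hW0ap]
  have hCstab' : ∀ m N N', m ≤ N → N ≤ N' → C N' m = C N m := by
    intro m N N' hm h
    induction N', h using Nat.le_induction with
    | base => rfl
    | succ N' hNN' ih => rw [hCstab N' m (by omega), ih]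
  let φ : ℕ → L → L := fun m => C m m
  have hφeq : ∀ N m, m ≤ N → φ m = C N m := fun N m hm => (hCstab' m m N le_rfl hm).symm
  have hrelF : ∀ N (a b c : LTSeries3 L), Gt (C N) (Ft (T N).1.1 a b c)
      = Ft f (Gt (C N) a) (Gt (C N) b) (Gt (C N) c) := by
    intro N
    induction N with
    | zero =>
        intro a b c
        show Gt idf (Ft f a b c) = Ft f (Gt idf a) (Gt idf b) (Gt idf c)
        rw [gt_idf, gt_idf, gt_idf, gt_idf]
    | succ N ih =>
        intro a b c
        show Gt (convf (C N) (W N)) (Ft (T (N + 1)).1.1 a b c) = _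
        rw [gt_conv (hCadd N) (hCzero N) (hWadd N) (hWzero N),
          (hspec N).2.2.2.2.1 a b c, ih,
          ← gt_conv (hCadd N) (hCzero N) (hWadd N) (hWzero N) a,
          ← gt_conv (hCadd N) (hCzero N) (hWadd N) (hWzero N) b,
          ← gt_conv (hCadd N) (hCzero N) (hWadd N) (hWzero N) c]
  have hrelG : ∀ N (a : LTSeries3 L), Gt (C N) (Gt (T N).1.2 a) = Gt g (Gt (C N) a) := by
    intro N
    induction N with
    | zero =>
        intro a
        show Gt idf (Gt g a) = Gt g (Gt idf a)
        rw [gt_idf, gt_idf]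
    | succ N ih =>
        intro a
        show Gt (convf (C N) (W N)) (Gt (T (N + 1)).1.2 a) = _
        rw [gt_conv (hCadd N) (hCzero N) (hWadd N) (hWzero N),
          (hspec N).2.2.2.2.2 a, ih,
          ← gt_conv (hCadd N) (hCzero N) (hWadd N) (hWzero N) a]
  have hTdef : ∀ N, IsDeformation F bracket θ (T N).1.1 (T N).1.2 := fun N => (T N).2.1
  have hTtriv : ∀ N m, 0 < m → m ≤ N → (T N).1.1 m = 0 ∧ (T N).1.2 m = 0 :=
    fun N => (T N).2.2
  refine ⟨φ, rfl, fun i => hClin i i, ?_, ?_⟩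
  · intro a b c
    funext n
    have e1 : Gt φ (Ft (fun i => if i = 0 then bracket else 0) a b c) n
        = Gt (C n) (Ft (fun i => if i = 0 then bracket else 0) a b c) n :=
      gt_fam_low (fun p hp => hφeq n p hp)
    have e2 : Gt (C n) (Ft (fun i => if i = 0 then bracket else 0) a b c) n
        = Gt (C n) (Ft (T n).1.1 a b c) n := by
      refine gt_low (fun m hm => ft_fam_low (fun p hp => ?_))
      rcases Nat.eq_zero_or_pos p with h | h
      · subst h
        rw [(hTdef n).1]
        rfl
      · rw [(hTtriv n p h (by omega)).1]
        simp [h.ne']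
    have e3 : Ft f (Gt (C n) a) (Gt (C n) b) (Gt (C n) c) n
        = Ft f (Gt φ a) (Gt φ b) (Gt φ c) n := by
      refine ft_low (fun m hm => ?_) (fun m hm => ?_) (fun m hm => ?_) <;>
        exact gt_fam_low (fun p hp => (hφeq n p (by omega)).symm)
    rw [e1, e2, congrFun (hrelF n a b c) n, e3]
  · intro a
    funext n
    have e1 : Gt φ (Gt (fun i => if i = 0 then θ else 0) a) n
        = Gt (C n) (Gt (fun i => if i = 0 then θ else 0) a) n :=
      gt_fam_low (fun p hp => hφeq n p hp)
    have e2 : Gt (C n) (Gt (fun i => if i = 0 then θ else 0) a) n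
        = Gt (C n) (Gt (T n).1.2 a) n := by
      refine gt_low (fun m hm => gt_fam_low (fun p hp => ?_))
      rcases Nat.eq_zero_or_pos p with h | h
      · subst h
        rw [(hTdef n).2.1]
        rfl
      · rw [(hTtriv n p h (by omega)).2]
        simp [h.ne']
    have e3 : Gt g (Gt (C n) a) n = Gt g (Gt φ a) n := by
      refine gt_low (fun m hm => ?_)
      exact gt_fam_low (fun p hp => (hφeq n p (by omega)).symm)
    rw [e1, e2, congrFun (hrelG n a) n, e3]
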